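/- Let (K_n)_{n≥1} be nonnegative integral kernels on X, (ν_n)_{n≥1} nonzero finite measures on X, and (S_n⁻, S_n⁺)_{n≥1} bounded measurable functions with 0 < S_n⁻(x) ≤ S_n⁺(x) for all x, such that S_n⁻(x)ν_n(A) ≤ K_n(x,A) ≤ S_n⁺(x)ν_n(A) for all x, A and n ≥ 1. Set S̄_n := sup_{x,x'} S_n⁺(x)/S_n⁻(x'), assume C_S := sup_{n≥1} S̄_n < ∞, and set ρ_n := 1 − (inf_x S_n⁻(x)/S_n⁺(x))². Then: (i) sup_{n≥1} sup_{x,x'∈X} K_{0,n}(1)(x)/K_{0,n}(1)(x') ≤ C_S; and (ii) for every probability measure η on X, every bounded measurable φ, and every n ≥ 1, sup_{x∈X} | K_{0,n}(φ)(x)/ηK_{0,n}(1) − (K_{0,n}(1)(x)/ηK_{0,n}(1))·(ηK_{0,n}(φ)/ηK_{0,n}(1)) | ≤ 2‖φ‖ C_S ∏_{p=1}^{n} ρ_p. -/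

import Mathlib

open MeasureTheory ProbabilityTheory Filter
open scoped ENNReal

/-- The composition `K_{0,n} := K_1 K_2 ⋯ K_n` of integral kernels acting on functions,
with `K_{0,0} = Id`: `Kprod K n φ = K_1(K_2(⋯ K_n(φ)))`. -/
noncomputable def Kprod {X : Type*} [MeasurableSpace X] (K : ℕ → Kernel X X) :
    ℕ → (X → ℝ) → X → ℝ
  | 0 => fun φ => φ
  | n + 1 => fun φ => Kprod K n fun z => ∫ y, φ y ∂(K (n + 1) z)

section Aux

variable {X : Type*} [MeasurableSpace X]

lemma integrable_bdd (μ : Measure X) [IsFiniteMeasure μ] {f : X → ℝ} (hf : Measurable f)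
    {c : ℝ} (hc : ∀ y, |f y| ≤ c) : Integrable f μ :=
  ⟨hf.aestronglyMeasurable, HasFiniteIntegral.of_bounded (C := c)
    (Filter.Eventually.of_forall (by simpa [Real.norm_eq_abs] using hc))⟩

lemma Kprod_shift (K : ℕ → Kernel X X) :
    ∀ (n : ℕ) (φ : X → ℝ) (x : X),
      Kprod K (n + 1) φ x = ∫ y, Kprod (fun m => K (m + 1)) n φ y ∂(K 1 x) := by
  intro n
  induction n with
  | zero => intro φ x; rfl
  | succ n ih =>
      intro φ x
      exact ih (fun z => ∫ y, φ y ∂(K (n + 2) z)) x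

lemma oneStep [Nonempty X] (κ : Kernel X X) (ν : Measure X) [IsFiniteMeasure ν] (hν : ν ≠ 0)
    (sm sp : X → ℝ) (hsm : ∀ z, 0 < sm z) (hsmsp : ∀ z, sm z ≤ sp z)
    (hsand : ∀ (z : X) (A : Set X), MeasurableSet A →
      ENNReal.ofReal (sm z) * ν A ≤ κ z A ∧ κ z A ≤ ENNReal.ofReal (sp z) * ν A)
    (f g : X → ℝ) (hf : Measurable f) (hg : Measurable g)
    (hgpos : ∀ y, 0 < g y) (cg : ℝ) (hgb : ∀ y, g y ≤ cg)
    (B : ℝ) (hB : 0 ≤ B) (hfb : ∀ y, |f y| ≤ B * g y)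
    (D : ℝ) (hD : 0 ≤ D)
    (hosc : ∀ y y', f y * g y' - f y' * g y ≤ D * (g y * g y')) (x x' : X) :
    (∫ y, f y ∂κ x) * (∫ y, g y ∂κ x') - (∫ y, f y ∂κ x') * (∫ y, g y ∂κ x)
      ≤ (1 - ⨅ z, sm z / sp z) * D * ((∫ y, g y ∂κ x) * (∫ y, g y ∂κ x')) := by
  have hspz : ∀ z, 0 < sp z := fun z => lt_of_lt_of_le (hsm z) (hsmsp z)
  have hκfin : ∀ z, IsFiniteMeasure (κ z) := fun z =>
    ⟨lt_of_le_of_lt (hsand z Set.univ MeasurableSet.univ).2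
      (ENNReal.mul_lt_top ENNReal.ofReal_lt_top (measure_lt_top ν _))⟩
  have hlow : ∀ z, (ENNReal.ofReal (sm z)) • ν ≤ κ z := fun z =>
    Measure.le_iff.mpr fun s hs => by
      simpa [Measure.smul_apply, smul_eq_mul] using (hsand z s hs).1
  have hup : ∀ z, κ z ≤ (ENNReal.ofReal (sp z)) • ν := fun z =>
    Measure.le_iff.mpr fun s hs => by
      simpa [Measure.smul_apply, smul_eq_mul] using (hsand z s hs).2
  have hcg : 0 < cg := lt_of_lt_of_le (hgpos (Classical.arbitrary X)) (hgb _)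
  have hgabs : ∀ y, |g y| ≤ cg := fun y => by
    rw [abs_of_pos (hgpos y)]; exact hgb y
  have hfabs : ∀ y, |f y| ≤ B * cg := fun y =>
    (hfb y).trans (mul_le_mul_of_nonneg_left (hgb y) hB)
  have hIg : ∀ z, Integrable g (κ z) := fun z => by
    haveI := hκfin z; exact integrable_bdd _ hg hgabs
  have hIf : ∀ z, Integrable f (κ z) := fun z => by
    haveI := hκfin z; exact integrable_bdd _ hf hfabs
  have hIgν : Integrable g ν := integrable_bdd _ hg hgabs
  have hIfν : Integrable f ν := integrable_bdd _ hf hfabs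
  set vg := ∫ y, g y ∂ν with hvg_def
  set vf := ∫ y, f y ∂ν with hvf_def
  have hvg : 0 < vg := by
    rw [hvg_def]
    rw [integral_pos_iff_support_of_nonneg (fun y => (hgpos y).le) hIgν]
    have : Function.support g = Set.univ := Set.eq_univ_of_forall fun y => (hgpos y).ne'
    rw [this]
    exact Measure.measure_univ_pos.mpr hν
  set G := fun z => ∫ y, g y ∂κ z with hG_def
  have hGlow : ∀ z, sm z * vg ≤ G z := by
    intro z
    have h1 : ∫ y, g y ∂((ENNReal.ofReal (sm z)) • ν) ≤ G z :=
      integral_mono_measure (hlow z) (Filter.Eventually.of_forall fun y => (hgpos y).le) (hIg z)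
    rwa [integral_smul_measure, ENNReal.toReal_ofReal (hsm z).le, smul_eq_mul] at h1
  have hGup : ∀ z, G z ≤ sp z * vg := by
    intro z
    have h1 : G z ≤ ∫ y, g y ∂((ENNReal.ofReal (sp z)) • ν) :=
      integral_mono_measure (hup z) (Filter.Eventually.of_forall fun y => (hgpos y).le)
        (hIgν.smul_measure ENNReal.ofReal_ne_top)
    rwa [integral_smul_measure, ENNReal.toReal_ofReal (hspz z).le, smul_eq_mul] at h1
  have hGpos : ∀ z, 0 < G z := fun z => lt_of_lt_of_le (mul_pos (hsm z) hvg) (hGlow z)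
  set ε := ⨅ z, sm z / sp z with hε_def
  have hbdd : BddBelow (Set.range fun z => sm z / sp z) :=
    ⟨0, fun r ⟨z, hz⟩ => hz ▸ div_nonneg (hsm z).le (hspz z).le⟩
  have hε0 : 0 ≤ ε := le_ciInf fun z => div_nonneg (hsm z).le (hspz z).le
  have hε1 : ε ≤ 1 := (ciInf_le hbdd (Classical.arbitrary X)).trans
    ((div_le_one (hspz _)).mpr (hsmsp _))
  have hεsp : ∀ z, ε * sp z ≤ sm z := fun z =>
    (le_div_iff₀ (hspz z)).mp (ciInf_le hbdd z)
  -- ratios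
  set h := fun y => f y / g y with hh_def
  have habs : ∀ y, |h y| ≤ B := fun y => by
    rw [hh_def, abs_div, abs_of_pos (hgpos y), div_le_iff₀ (hgpos y)]
    exact hfb y
  have hbddA : BddAbove (Set.range h) :=
    ⟨B, fun r ⟨y, hy⟩ => hy ▸ (le_abs_self _).trans (habs y)⟩
  have hbddB : BddBelow (Set.range h) :=
    ⟨-B, fun r ⟨y, hy⟩ => hy ▸ (abs_le.mp (habs y)).1⟩
  set M := ⨆ y, h y with hM_def
  set m := ⨅ y, h y with hm_def
  have hhM : ∀ y, h y ≤ M := fun y => le_ciSup hbddA y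
  have hmh : ∀ y, m ≤ h y := fun y => ciInf_le hbddB y
  have hfg : ∀ y, f y = h y * g y := fun y => (div_mul_cancel₀ _ (hgpos y).ne').symm
  have hfMg : ∀ y, f y ≤ M * g y := fun y => by
    rw [hfg y]; exact mul_le_mul_of_nonneg_right (hhM y) (hgpos y).le
  have hmgf : ∀ y, m * g y ≤ f y := fun y => by
    rw [hfg y]; exact mul_le_mul_of_nonneg_right (hmh y) (hgpos y).le
  have hosch : ∀ y y', h y - h y' ≤ D := by
    intro y y'
    have e : h y - h y' = (f y * g y' - f y' * g y) / (g y * g y') := by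
      rw [hh_def]
      rw [div_sub_div _ _ (hgpos y).ne' (hgpos y').ne']
      ring_nf
    rw [e, div_le_iff₀ (mul_pos (hgpos y) (hgpos y'))]
    exact hosc y y'
  have hMm : M - m ≤ D := by
    have h1 : M ≤ D + m := ciSup_le fun y => by
      have : h y - D ≤ m := le_ciInf fun y' => by linarith [hosch y y']
      linarith
    linarith
  have hvfM : vf ≤ M * vg := by
    have := integral_mono hIfν (hIgν.const_mul M) hfMg
    rwa [integral_const_mul] at this
  have hmvf : m * vg ≤ vf := by
    have := integral_mono (hIgν.const_mul m) hIfν hmgf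
    rwa [integral_const_mul] at this
  -- per-point upper estimate
  have hA : ∀ z, vg * (∫ y, f y ∂κ z) ≤ (1 - ε) * M * G z * vg + ε * vf * G z := by
    intro z
    haveI := hκfin z
    have step1 : sm z * (M * vg - vf) ≤ M * G z - ∫ y, f y ∂κ z := by
      have h1 : ∫ y, (M * g y - f y) ∂((ENNReal.ofReal (sm z)) • ν) ≤
          ∫ y, (M * g y - f y) ∂(κ z) :=
        integral_mono_measure (hlow z)
          (Filter.Eventually.of_forall fun y => sub_nonneg.mpr (hfMg y))
          (((hIg z).const_mul M).sub (hIf z))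
      rw [integral_smul_measure, ENNReal.toReal_ofReal (hsm z).le, smul_eq_mul,
        integral_sub ((hIgν).const_mul M) hIfν, integral_const_mul,
        integral_sub ((hIg z).const_mul M) (hIf z), integral_const_mul] at h1
      exact h1
    have step2 : ε * (G z * (M * vg - vf)) ≤ sm z * vg * (M * vg - vf) := by
      have hMvf : 0 ≤ M * vg - vf := by linarith
      have e1 : G z * (M * vg - vf) ≤ sp z * vg * (M * vg - vf) :=
        mul_le_mul_of_nonneg_right (hGup z) hMvf
      have e2 : ε * (sp z * vg * (M * vg - vf)) ≤ sm z * (vg * (M * vg - vf)) := by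
        have := mul_le_mul_of_nonneg_right (hεsp z)
          (mul_nonneg hvg.le hMvf)
        nlinarith
      nlinarith [mul_le_mul_of_nonneg_left e1 hε0]
    have step3 := mul_le_mul_of_nonneg_left step1 hvg.le
    nlinarith [step2, step3]
  -- per-point lower estimate
  have hB' : ∀ z, (1 - ε) * m * G z * vg + ε * vf * G z ≤ vg * (∫ y, f y ∂κ z) := by
    intro z
    haveI := hκfin z
    have step1 : sm z * (vf - m * vg) ≤ (∫ y, f y ∂κ z) - m * G z := by
      have h1 : ∫ y, (f y - m * g y) ∂((ENNReal.ofReal (sm z)) • ν) ≤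
          ∫ y, (f y - m * g y) ∂(κ z) :=
        integral_mono_measure (hlow z)
          (Filter.Eventually.of_forall fun y => sub_nonneg.mpr (hmgf y))
          ((hIf z).sub ((hIg z).const_mul m))
      rw [integral_smul_measure, ENNReal.toReal_ofReal (hsm z).le, smul_eq_mul,
        integral_sub hIfν ((hIgν).const_mul m), integral_const_mul,
        integral_sub (hIf z) ((hIg z).const_mul m), integral_const_mul] at h1
      exact h1
    have step2 : ε * (G z * (vf - m * vg)) ≤ sm z * vg * (vf - m * vg) := by
      have hMvf : 0 ≤ vf - m * vg := by linarith
      have e1 : G z * (vf - m * vg) ≤ sp z * vg * (vf - m * vg) :=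
        mul_le_mul_of_nonneg_right (hGup z) hMvf
      have e2 := mul_le_mul_of_nonneg_right (hεsp z) (mul_nonneg hvg.le hMvf)
      nlinarith [mul_le_mul_of_nonneg_left e1 hε0]
    have step3 := mul_le_mul_of_nonneg_left step1 hvg.le
    nlinarith [step2, step3]
  -- combine
  have hAx := hA x
  have hBx' := hB' x'
  have h1 := mul_le_mul_of_nonneg_right hAx (hGpos x').le
  have h2 := mul_le_mul_of_nonneg_right hBx' (hGpos x).le
  have h3 : (1 - ε) * (M - m) * (G x * G x') * vg ≤ (1 - ε) * D * (G x * G x') * vg := by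
    nlinarith [mul_nonneg (mul_nonneg (sub_nonneg.mpr hε1)
      (mul_nonneg (hGpos x).le (hGpos x').le)) hvg.le, hMm]
  have h4 : vg * ((∫ y, f y ∂κ x) * G x' - (∫ y, f y ∂κ x') * G x)
      ≤ vg * ((1 - ε) * D * (G x * G x')) := by nlinarith [h1, h2, h3]
  have := (mul_le_mul_iff_right₀ hvg).mp h4
  linarith

lemma main_ind [Nonempty X]
    (K : ℕ → Kernel X X) (νs : ℕ → Measure X)
    (hν_fin : ∀ n, IsFiniteMeasure (νs n)) (hν_ne : ∀ n, νs n ≠ 0)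
    (Sm Sp : ℕ → X → ℝ)
    (hSm_pos : ∀ n x, 0 < Sm n x) (hS_le : ∀ n x, Sm n x ≤ Sp n x)
    (hSp_bdd : ∀ n, ∃ c, ∀ x, Sp n x ≤ c)
    (h_sandwich : ∀ n : ℕ, 1 ≤ n → ∀ (x : X) (A : Set X), MeasurableSet A →
      ENNReal.ofReal (Sm n x) * νs n A ≤ K n x A ∧
        K n x A ≤ ENNReal.ofReal (Sp n x) * νs n A) :
    ∀ (n : ℕ) (f g : X → ℝ) (B D : ℝ), Measurable f → Measurable g →
      (∀ y, 0 < g y) → (∃ c, ∀ y, g y ≤ c) → 0 ≤ B → (∀ y, |f y| ≤ B * g y) → 0 ≤ D →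
      (∀ y y', f y * g y' - f y' * g y ≤ D * (g y * g y')) →
      Measurable (Kprod K n f) ∧ Measurable (Kprod K n g) ∧
      (∀ x, 0 < Kprod K n g x) ∧ (∃ c, ∀ x, Kprod K n g x ≤ c) ∧
      (∀ x, |Kprod K n f x| ≤ B * Kprod K n g x) ∧
      (∀ x x', Kprod K n f x * Kprod K n g x' - Kprod K n f x' * Kprod K n g x ≤
        (∏ i ∈ Finset.range n, (1 - ⨅ z, Sm (i + 1) z / Sp (i + 1) z)) * D *
          (Kprod K n g x * Kprod K n g x')) := by
  intro n
  induction n with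
  | zero =>
      intro f g B D hf hg hgpos hgb hB hfb hD hosc
      refine ⟨hf, hg, hgpos, hgb, hfb, ?_⟩
      intro x x'
      simpa [Kprod] using hosc x x'
  | succ n ih =>
      intro f g B D hf hg hgpos hgb hB hfb hD hosc
      obtain ⟨cg, hcg⟩ := hgb
      have hcg0 : 0 < cg := lt_of_lt_of_le (hgpos (Classical.arbitrary X)) (hcg _)
      set κ := K (n + 1) with hκ_def
      set ν := νs (n + 1) with hν_def
      haveI : IsFiniteMeasure ν := hν_fin (n + 1)
      obtain ⟨c, hc⟩ := hSp_bdd (n + 1)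
      have hsand := h_sandwich (n + 1) (Nat.succ_le_succ (Nat.zero_le n))
      have hc0 : 0 < c := lt_of_lt_of_le (lt_of_lt_of_le (hSm_pos (n+1) (Classical.arbitrary X))
        (hS_le (n+1) _)) (hc _)
      have hκfin : IsFiniteKernel κ := by
        refine ⟨ENNReal.ofReal c * ν Set.univ, ENNReal.mul_lt_top ENNReal.ofReal_lt_top
          (measure_lt_top ν _), fun z => ?_⟩
        refine le_trans (hsand z Set.univ MeasurableSet.univ).2 ?_
        exact mul_le_mul_left (ENNReal.ofReal_le_ofReal (hc z)) _
      haveI := hκfin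
      have hκfinz : ∀ z, IsFiniteMeasure (κ z) := fun z => inferInstance
      -- integrability
      have hgabs : ∀ y, |g y| ≤ cg := fun y => by rw [abs_of_pos (hgpos y)]; exact hcg y
      have hfabs : ∀ y, |f y| ≤ B * cg := fun y =>
        (hfb y).trans (mul_le_mul_of_nonneg_left (hcg y) hB)
      have hIg : ∀ z, Integrable g (κ z) := fun z => by
        haveI := hκfinz z; exact integrable_bdd _ hg hgabs
      have hIf : ∀ z, Integrable f (κ z) := fun z => by
        haveI := hκfinz z; exact integrable_bdd _ hf hfabs
      have hIgν : Integrable g ν := integrable_bdd _ hg hgabs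
      -- the new pair
      set f' := fun z => ∫ y, f y ∂κ z with hf'_def
      set g' := fun z => ∫ y, g y ∂κ z with hg'_def
      have hf' : Measurable f' := by
        have : StronglyMeasurable fun z => ∫ y, f y ∂κ z :=
          StronglyMeasurable.integral_kernel_prod_right (f := fun _ y => f y)
            (hf.comp measurable_snd).stronglyMeasurable
        exact this.measurable
      have hg' : Measurable g' := by
        have : StronglyMeasurable fun z => ∫ y, g y ∂κ z :=
          StronglyMeasurable.integral_kernel_prod_right (f := fun _ y => g y)
            (hg.comp measurable_snd).stronglyMeasurable
        exact this.measurable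
      have hlow : ∀ z, (ENNReal.ofReal (Sm (n+1) z)) • ν ≤ κ z := fun z =>
        Measure.le_iff.mpr fun s hs => by
          simpa [Measure.smul_apply, smul_eq_mul] using (hsand z s hs).1
      have hup : ∀ z, κ z ≤ (ENNReal.ofReal (Sp (n+1) z)) • ν := fun z =>
        Measure.le_iff.mpr fun s hs => by
          simpa [Measure.smul_apply, smul_eq_mul] using (hsand z s hs).2
      have hvg : 0 < ∫ y, g y ∂ν := by
        rw [integral_pos_iff_support_of_nonneg (fun y => (hgpos y).le) hIgν]
        have : Function.support g = Set.univ := Set.eq_univ_of_forall fun y => (hgpos y).ne'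
        rw [this]
        exact Measure.measure_univ_pos.mpr (hν_ne (n + 1))
      have hg'pos : ∀ z, 0 < g' z := by
        intro z
        have h1 : ∫ y, g y ∂((ENNReal.ofReal (Sm (n+1) z)) • ν) ≤ g' z :=
          integral_mono_measure (hlow z) (Filter.Eventually.of_forall fun y => (hgpos y).le)
            (hIg z)
        rw [integral_smul_measure, ENNReal.toReal_ofReal (hSm_pos (n+1) z).le, smul_eq_mul] at h1
        exact lt_of_lt_of_le (mul_pos (hSm_pos (n+1) z) hvg) h1
      have hg'bdd : ∀ z, g' z ≤ c * ∫ y, g y ∂ν := by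
        intro z
        have h1 : g' z ≤ ∫ y, g y ∂((ENNReal.ofReal (Sp (n+1) z)) • ν) :=
          integral_mono_measure (hup z) (Filter.Eventually.of_forall fun y => (hgpos y).le)
            (hIgν.smul_measure ENNReal.ofReal_ne_top)
        rw [integral_smul_measure, ENNReal.toReal_ofReal
          (lt_of_lt_of_le (hSm_pos (n+1) z) (hS_le (n+1) z)).le, smul_eq_mul] at h1
        exact h1.trans (mul_le_mul_of_nonneg_right (hc z) hvg.le)
      have hf'b : ∀ z, |f' z| ≤ B * g' z := by
        intro z
        haveI := hκfinz z
        calc |f' z| ≤ ∫ y, |f y| ∂κ z := by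
              simpa [Real.norm_eq_abs] using norm_integral_le_integral_norm (μ := κ z) f
          _ ≤ ∫ y, B * g y ∂κ z := integral_mono ((hIf z).abs) ((hIg z).const_mul B)
              fun y => hfb y
          _ = B * g' z := by rw [integral_const_mul]
      set εn := ⨅ z, Sm (n + 1) z / Sp (n + 1) z with hεn_def
      have hεn0 : 0 ≤ εn := le_ciInf fun z => div_nonneg (hSm_pos (n+1) z).le
        (lt_of_lt_of_le (hSm_pos (n+1) z) (hS_le (n+1) z)).le
      have hεn1 : εn ≤ 1 := by
        refine le_trans (ciInf_le ⟨0, fun r ⟨z, hz⟩ => hz ▸ div_nonneg (hSm_pos (n+1) z).le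
          (lt_of_lt_of_le (hSm_pos (n+1) z) (hS_le (n+1) z)).le⟩ (Classical.arbitrary X)) ?_
        exact (div_le_one (lt_of_lt_of_le (hSm_pos (n+1) _) (hS_le (n+1) _))).mpr (hS_le (n+1) _)
      have hosc' : ∀ y y', f' y * g' y' - f' y' * g' y ≤ ((1 - εn) * D) * (g' y * g' y') := by
        intro y y'
        have := oneStep κ ν (hν_ne (n+1)) (Sm (n+1)) (Sp (n+1)) (hSm_pos (n+1)) (hS_le (n+1))
          hsand f g hf hg hgpos cg hcg B hB hfb D hD hosc y y'
        calc f' y * g' y' - f' y' * g' y ≤ (1 - εn) * D * (g' y * g' y') := this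
          _ = ((1 - εn) * D) * (g' y * g' y') := by ring
      have key := ih f' g' B ((1 - εn) * D) hf' hg' hg'pos ⟨c * ∫ y, g y ∂ν, hg'bdd⟩ hB hf'b
        (mul_nonneg (by linarith) hD) hosc'
      obtain ⟨m1, m2, m3, m4, m5, m6⟩ := key
      refine ⟨m1, m2, m3, m4, m5, ?_⟩
      intro x x'
      rw [Finset.prod_range_succ]
      show Kprod K n f' x * Kprod K n g' x' - Kprod K n f' x' * Kprod K n g' x ≤
        (∏ i ∈ Finset.range n, (1 - ⨅ z, Sm (i + 1) z / Sp (i + 1) z)) *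
          (1 - ⨅ z, Sm (n + 1) z / Sp (n + 1) z) * D * (Kprod K n g' x * Kprod K n g' x')
      refine le_trans (m6 x x') (le_of_eq ?_)
      rw [hεn_def]
      ring

lemma ratio_bound [Nonempty X]
    (K : ℕ → Kernel X X) (νs : ℕ → Measure X)
    (hν_fin : ∀ n, IsFiniteMeasure (νs n)) (hν_ne : ∀ n, νs n ≠ 0)
    (Sm Sp : ℕ → X → ℝ)
    (hSm_pos : ∀ n x, 0 < Sm n x) (hS_le : ∀ n x, Sm n x ≤ Sp n x)
    (hSp_bdd : ∀ n, ∃ c, ∀ x, Sp n x ≤ c)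
    (h_sandwich : ∀ n : ℕ, 1 ≤ n → ∀ (x : X) (A : Set X), MeasurableSet A →
      ENNReal.ofReal (Sm n x) * νs n A ≤ K n x A ∧
        K n x A ≤ ENNReal.ofReal (Sp n x) * νs n A)
    (CS : ℝ) (hCS : ∀ n : ℕ, 1 ≤ n → ∀ x x' : X, Sp n x / Sm n x' ≤ CS) :
    ∀ n : ℕ, 1 ≤ n → ∀ x x' : X,
      Kprod K n (fun _ => (1 : ℝ)) x ≤ CS * Kprod K n (fun _ => (1 : ℝ)) x' := by
  intro n hn x x'
  obtain ⟨m, rfl⟩ : ∃ m, n = m + 1 := ⟨n - 1, by omega⟩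
  have hmain := main_ind (fun j => K (j + 1)) (fun j => νs (j + 1))
    (fun j => hν_fin (j + 1)) (fun j => hν_ne (j + 1))
    (fun j => Sm (j + 1)) (fun j => Sp (j + 1))
    (fun j => hSm_pos (j + 1)) (fun j => hS_le (j + 1)) (fun j => hSp_bdd (j + 1))
    (fun j _ => h_sandwich (j + 1) (Nat.succ_le_succ (Nat.zero_le j)))
    m (fun _ => (1 : ℝ)) (fun _ => (1 : ℝ)) 1 0 measurable_const measurable_const
    (fun _ => one_pos) ⟨1, fun _ => le_refl 1⟩ zero_le_one
    (fun _ => by norm_num) (le_refl 0) (fun _ _ => by norm_num)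
  obtain ⟨-, hg'meas, hg'pos, ⟨cg', hcg'⟩, -, -⟩ := hmain
  set g' := Kprod (fun j => K (j + 1)) m (fun _ => (1 : ℝ)) with hg'_def
  set ν := νs 1 with hν_def
  haveI : IsFiniteMeasure ν := hν_fin 1
  have hsand := h_sandwich 1 le_rfl
  obtain ⟨c, hc⟩ := hSp_bdd 1
  have hκfinz : ∀ z, IsFiniteMeasure (K 1 z) := fun z =>
    ⟨lt_of_le_of_lt (hsand z Set.univ MeasurableSet.univ).2
      (ENNReal.mul_lt_top ENNReal.ofReal_lt_top (measure_lt_top ν _))⟩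
  have hg'abs : ∀ z, |g' z| ≤ cg' := fun z => by
    rw [abs_of_pos (hg'pos z)]; exact hcg' z
  have hIg' : ∀ z, Integrable g' (K 1 z) := fun z => by
    haveI := hκfinz z; exact integrable_bdd _ hg'meas hg'abs
  have hIg'ν : Integrable g' ν := integrable_bdd _ hg'meas hg'abs
  have hlow : ∀ z, (ENNReal.ofReal (Sm 1 z)) • ν ≤ K 1 z := fun z =>
    Measure.le_iff.mpr fun s hs => by
      simpa [Measure.smul_apply, smul_eq_mul] using (hsand z s hs).1
  have hup : ∀ z, K 1 z ≤ (ENNReal.ofReal (Sp 1 z)) • ν := fun z =>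
    Measure.le_iff.mpr fun s hs => by
      simpa [Measure.smul_apply, smul_eq_mul] using (hsand z s hs).2
  set I := ∫ y, g' y ∂ν with hI_def
  have hI0 : 0 ≤ I := integral_nonneg fun y => (hg'pos y).le
  have hupx : ∫ y, g' y ∂(K 1 x) ≤ Sp 1 x * I := by
    have h1 : ∫ y, g' y ∂(K 1 x) ≤ ∫ y, g' y ∂((ENNReal.ofReal (Sp 1 x)) • ν) :=
      integral_mono_measure (hup x) (Filter.Eventually.of_forall fun y => (hg'pos y).le)
        (hIg'ν.smul_measure ENNReal.ofReal_ne_top)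
    rwa [integral_smul_measure, ENNReal.toReal_ofReal
      (lt_of_lt_of_le (hSm_pos 1 x) (hS_le 1 x)).le, smul_eq_mul] at h1
  have hlowx' : Sm 1 x' * I ≤ ∫ y, g' y ∂(K 1 x') := by
    have h1 : ∫ y, g' y ∂((ENNReal.ofReal (Sm 1 x')) • ν) ≤ ∫ y, g' y ∂(K 1 x') :=
      integral_mono_measure (hlow x') (Filter.Eventually.of_forall fun y => (hg'pos y).le)
        (hIg' x')
    rwa [integral_smul_measure, ENNReal.toReal_ofReal (hSm_pos 1 x').le, smul_eq_mul] at h1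
  have hCS0 : 0 ≤ CS := le_trans (div_nonneg (lt_of_lt_of_le (hSm_pos 1 x) (hS_le 1 x)).le
    (hSm_pos 1 x').le) (hCS 1 le_rfl x x')
  have hSpCS : Sp 1 x ≤ CS * Sm 1 x' := by
    have := hCS 1 le_rfl x x'
    rw [div_le_iff₀ (hSm_pos 1 x')] at this
    linarith
  rw [Kprod_shift K m _ x, Kprod_shift K m _ x']
  calc ∫ y, g' y ∂(K 1 x) ≤ Sp 1 x * I := hupx
    _ ≤ CS * Sm 1 x' * I := mul_le_mul_of_nonneg_right hSpCS hI0
    _ = CS * (Sm 1 x' * I) := by ring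
    _ ≤ CS * ∫ y, g' y ∂(K 1 x') := mul_le_mul_of_nonneg_left hlowx' hCS0

end Aux

theorem stmt13 {X : Type*} [MeasurableSpace X]
    (K : ℕ → Kernel X X) (νs : ℕ → Measure X)
    (hν_fin : ∀ n, IsFiniteMeasure (νs n)) (hν_ne : ∀ n, νs n ≠ 0)
    (Sm Sp : ℕ → X → ℝ)
    (hSm_meas : ∀ n, Measurable (Sm n)) (hSp_meas : ∀ n, Measurable (Sp n))
    (hSm_pos : ∀ n x, 0 < Sm n x) (hS_le : ∀ n x, Sm n x ≤ Sp n x)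
    (hSp_bdd : ∀ n, ∃ c, ∀ x, Sp n x ≤ c)
    (h_sandwich : ∀ n : ℕ, 1 ≤ n → ∀ (x : X) (A : Set X), MeasurableSet A →
      ENNReal.ofReal (Sm n x) * νs n A ≤ K n x A ∧
        K n x A ≤ ENNReal.ofReal (Sp n x) * νs n A)
    (CS : ℝ) (hCS : ∀ n : ℕ, 1 ≤ n → ∀ x x' : X, Sp n x / Sm n x' ≤ CS) :
    -- (i) uniform control of the ratios of K_{0,n}(1)
    (∀ n : ℕ, 1 ≤ n → ∀ x x' : X,
      Kprod K n (fun _ => (1 : ℝ)) x / Kprod K n (fun _ => (1 : ℝ)) x' ≤ CS) ∧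
    -- (ii) path-wise contraction estimate
    (∀ (η : Measure X), IsProbabilityMeasure η →
      ∀ (φ : X → ℝ), Measurable φ → ∀ b : ℝ, (∀ x, |φ x| ≤ b) →
      ∀ n : ℕ, 1 ≤ n → ∀ x : X,
        |(Kprod K n φ x) / (∫ z, Kprod K n (fun _ => (1 : ℝ)) z ∂η)
            - (Kprod K n (fun _ => (1 : ℝ)) x / ∫ z, Kprod K n (fun _ => (1 : ℝ)) z ∂η)
              * ((∫ z, Kprod K n φ z ∂η) / ∫ z, Kprod K n (fun _ => (1 : ℝ)) z ∂η)|
          ≤ 2 * b * CS * ∏ p ∈ Finset.Icc 1 n, (1 - (⨅ x' : X, Sm p x' / Sp p x') ^ 2)) := by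
  constructor
  · intro n hn x x'
    haveI : Nonempty X := ⟨x⟩
    have hmain := main_ind K νs hν_fin hν_ne Sm Sp hSm_pos hS_le hSp_bdd h_sandwich n
      (fun _ => (1 : ℝ)) (fun _ => (1 : ℝ)) 1 0 measurable_const measurable_const
      (fun _ => one_pos) ⟨1, fun _ => le_refl 1⟩ zero_le_one (fun _ => by norm_num)
      (le_refl 0) (fun _ _ => by norm_num)
    have hGpos := hmain.2.2.1 x'
    rw [div_le_iff₀ hGpos]
    have := ratio_bound K νs hν_fin hν_ne Sm Sp hSm_pos hS_le hSp_bdd h_sandwich CS hCS n hn x x'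
    linarith
  · intro η hη φ hφ b hb n hn x
    haveI : Nonempty X := ⟨x⟩
    have hb0 : 0 ≤ b := le_trans (abs_nonneg _) (hb x)
    have hmain := main_ind K νs hν_fin hν_ne Sm Sp hSm_pos hS_le hSp_bdd h_sandwich n
      φ (fun _ => (1 : ℝ)) b (2 * b) hφ measurable_const (fun _ => one_pos)
      ⟨1, fun _ => le_refl 1⟩ hb0 (fun y => by simpa using hb y) (by linarith)
      (fun y y' => by
        have h1 := abs_le.mp (hb y)
        have h2 := abs_le.mp (hb y')
        simp only [mul_one]
        linarith)
    obtain ⟨hFm, hGm, hGpos, ⟨cG, hcG⟩, hFb, hcross⟩ := hmain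
    set F := Kprod K n φ with hF_def
    set G := Kprod K n (fun _ => (1 : ℝ)) with hG_def
    set R := ∏ i ∈ Finset.range n, (1 - ⨅ z, Sm (i + 1) z / Sp (i + 1) z) with hR_def
    have hε : ∀ p : ℕ, 0 ≤ (⨅ z, Sm p z / Sp p z) ∧ (⨅ z, Sm p z / Sp p z) ≤ 1 := by
      intro p
      have hsp : ∀ z, 0 < Sp p z := fun z => lt_of_lt_of_le (hSm_pos p z) (hS_le p z)
      have hbdd : BddBelow (Set.range fun z => Sm p z / Sp p z) :=
        ⟨0, fun r ⟨z, hz⟩ => hz ▸ div_nonneg (hSm_pos p z).le (hsp z).le⟩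
      constructor
      · exact le_ciInf fun z => div_nonneg (hSm_pos p z).le (hsp z).le
      · exact (ciInf_le hbdd (Classical.arbitrary X)).trans
          ((div_le_one (hsp _)).mpr (hS_le p _))
    have hR0 : 0 ≤ R := Finset.prod_nonneg fun i _ => by linarith [(hε (i + 1)).2]
    have hCS0 : 0 ≤ CS := le_trans (div_nonneg (lt_of_lt_of_le (hSm_pos 1 x)
      (hS_le 1 x)).le (hSm_pos 1 x).le) (hCS 1 le_rfl x x)
    have hcG0 : 0 < cG := lt_of_lt_of_le (hGpos (Classical.arbitrary X)) (hcG _)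
    have hIG : Integrable G η := integrable_bdd _ hGm
      (fun z => by rw [abs_of_pos (hGpos z)]; exact hcG z)
    have hIF : Integrable F η := integrable_bdd _ hFm
      (fun z => (hFb z).trans (mul_le_mul_of_nonneg_left (hcG z) hb0))
    set I := ∫ z, G z ∂η with hI_def
    set J := ∫ z, F z ∂η with hJ_def
    have hI0 : 0 < I := by
      rw [hI_def, integral_pos_iff_support_of_nonneg (fun z => (hGpos z).le) hIG]
      have : Function.support G = Set.univ := Set.eq_univ_of_forall fun z => (hGpos z).ne'
      rw [this]
      simp [hη.measure_univ]
    have hGxI : G x ≤ CS * I := by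
      have hpt : ∀ z, G x ≤ CS * G z := fun z =>
        ratio_bound K νs hν_fin hν_ne Sm Sp hSm_pos hS_le hSp_bdd h_sandwich CS hCS n hn x z
      have h1 : ∫ _z, G x ∂η ≤ ∫ z, CS * G z ∂η :=
        integral_mono (integrable_const _) (hIG.const_mul CS) hpt
      rwa [integral_const, measureReal_def, hη.measure_univ, ENNReal.toReal_one, one_smul,
        integral_const_mul] at h1
    have hkey : |F x * I - G x * J| ≤ R * (2 * b) * (G x * I) := by
      have hid : F x * I - G x * J = ∫ z, (F x * G z - F z * G x) ∂η := by
        rw [integral_sub (hIG.const_mul (F x)) (hIF.mul_const (G x)),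
          integral_const_mul, integral_mul_const, hI_def, hJ_def]
        ring
      rw [hid]
      have habs_int : |∫ z, (F x * G z - F z * G x) ∂η| ≤
          ∫ z, |F x * G z - F z * G x| ∂η := by
        simpa [Real.norm_eq_abs] using
          norm_integral_le_integral_norm (μ := η) (fun z => F x * G z - F z * G x)
      refine habs_int.trans ?_
      have hmono : ∫ z, |F x * G z - F z * G x| ∂η ≤
          ∫ z, R * (2 * b) * G x * G z ∂η := by
        refine integral_mono ((hIG.const_mul (F x)).sub (hIF.mul_const (G x))).abs
          (hIG.const_mul _) (fun z => ?_)
        refine abs_le.mpr ⟨?_, ?_⟩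
        · have := hcross z x
          nlinarith
        · have := hcross x z
          nlinarith
      refine hmono.trans (le_of_eq ?_)
      rw [integral_const_mul]
      ring
    have hIcc : ∏ p ∈ Finset.Icc 1 n, (1 - (⨅ x' : X, Sm p x' / Sp p x') ^ 2)
        = ∏ i ∈ Finset.range n, (1 - (⨅ x' : X, Sm (i + 1) x' / Sp (i + 1) x') ^ 2) := by
      rw [← Finset.Ico_add_one_right_eq_Icc, Finset.prod_Ico_eq_prod_range]
      exact Finset.prod_congr (by norm_num) fun i _ => by rw [Nat.add_comm]
    have hRP : R ≤ ∏ i ∈ Finset.range n, (1 - (⨅ x' : X, Sm (i + 1) x' / Sp (i + 1) x') ^ 2) := by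
      rw [hR_def]
      refine Finset.prod_le_prod (fun i _ => by linarith [(hε (i + 1)).2]) (fun i _ => ?_)
      have h1 := (hε (i + 1)).1
      have h2 := (hε (i + 1)).2
      nlinarith
    have hgoal_eq : F x / I - G x / I * (J / I) = (F x * I - G x * J) / I ^ 2 := by
      field_simp
    rw [hgoal_eq, abs_div, abs_of_pos (pow_pos hI0 2), div_le_iff₀ (pow_pos hI0 2)]
    rw [hIcc]
    set P := ∏ i ∈ Finset.range n, (1 - (⨅ x' : X, Sm (i + 1) x' / Sp (i + 1) x') ^ 2) with hP_def
    have t1 : G x * I ≤ CS * I * I := by nlinarith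
    have t2 : R * (2 * b) * (G x * I) ≤ R * (2 * b) * (CS * I * I) :=
      mul_le_mul_of_nonneg_left t1 (mul_nonneg hR0 (by linarith))
    have t3 : R * (2 * b) * (CS * I * I) ≤ 2 * b * CS * P * I ^ 2 := by
      have : R * (2 * b) * (CS * I * I) = (2 * b * CS * R) * I ^ 2 := by ring
      rw [this]
      have h4 : 2 * b * CS * R ≤ 2 * b * CS * P :=
        mul_le_mul_of_nonneg_left hRP (by positivity)
      nlinarith [sq_nonneg I]
    linarith
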